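/- Let V̄ > 0 and let V* be an equilibrium configuration with mean V̄ having at least two coordinates strictly greater than 1. Then the restriction of 𝒲 to 𝕍(V̄) does not attain a local minimum at V*. -/

import Mathlib

/-- Droplet volume as a function of height: v(h) = h(h²+3)/4. -/
noncomputable def vol (h : ℝ) : ℝ := h * (h ^ 2 + 3) / 4

/-- Droplet pressure as a function of height: p(h) = 4h/(h²+1). -/
noncomputable def pres (h : ℝ) : ℝ := 4 * h / (h ^ 2 + 1)

/-- Pressure as a function of volume: P(V) = p(h) where v(h) = V
(v is a strictly increasing bijection of ℝ, so its inverse is well defined). -/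
noncomputable def Pfun (V : ℝ) : ℝ := pres (Function.invFun vol V)

/-- Δ_s(x) = |x|^s sgn(x). -/
noncomputable def Ds (s x : ℝ) : ℝ := |x| ^ s * Real.sign x

/-- The energy functional 𝒲(V) = (1/N) Σ_j ∫_0^{V_j} P(u) du. -/
noncomputable def Wfun (N : ℕ) (V : Fin N → ℝ) : ℝ :=
  (1 / (N : ℝ)) * ∑ j, ∫ u in (0 : ℝ)..(V j), Pfun u

/-- The constraint set 𝕍(V̄) = {V ∈ ℝ^N : (1/N) Σ_j V_j = V̄}. -/
def Vset (N : ℕ) (Vbar : ℝ) : Set (Fin N → ℝ) :=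
  {V | (1 / (N : ℝ)) * ∑ j, V j = Vbar}

lemma vol_sm : StrictMono vol := by
  intro a b hab
  unfold vol
  nlinarith [sq_nonneg (a+b), sq_nonneg a, sq_nonneg b]

lemma vol_cont : Continuous vol := by unfold vol; continuity

lemma vol_surj : Function.Surjective vol := by
  apply Continuous.surjective vol_cont
  · apply Filter.tendsto_atTop_mono' _ _ Filter.tendsto_id
    filter_upwards [Filter.eventually_ge_atTop (1:ℝ)] with x hx
    unfold vol; simp only [id_eq]
    nlinarith [mul_nonneg (by linarith : (0:ℝ) ≤ x) (by nlinarith : (0:ℝ) ≤ x^2-1)]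
  · apply Filter.tendsto_atBot_mono' _ _ Filter.tendsto_id
    filter_upwards [Filter.eventually_le_atBot (-1:ℝ)] with x hx
    unfold vol; simp only [id_eq]
    nlinarith [mul_nonneg (by linarith : (0:ℝ) ≤ -x) (by nlinarith : (0:ℝ) ≤ x^2-1)]

lemma vol_inv (V : ℝ) : vol (Function.invFun vol V) = V :=
  Function.rightInverse_invFun vol_surj V

lemma vol_one : vol 1 = 1 := by unfold vol; norm_num

lemma invFun_vol_ge_one {V : ℝ} (h : 1 ≤ V) : 1 ≤ Function.invFun vol V := by
  have := vol_inv V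
  rw [← vol_sm.le_iff_le, this, vol_one]; exact h

lemma Pfun_strictAntiOn : StrictAntiOn Pfun (Set.Ici 1) := by
  intro a ha b hb hab
  have h1 : 1 ≤ Function.invFun vol a := invFun_vol_ge_one ha
  have h2 : Function.invFun vol a < Function.invFun vol b := by
    rw [← vol_sm.lt_iff_lt, vol_inv, vol_inv]; exact hab
  set x := Function.invFun vol a
  set y := Function.invFun vol b
  unfold Pfun pres
  rw [div_lt_div_iff₀ (by positivity) (by positivity)]
  nlinarith [mul_pos (by linarith : (0:ℝ) < y - x) (by nlinarith : (0:ℝ) < x*y - 1)]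

lemma Pfun_cont : Continuous Pfun := by
  have e : ℝ ≃o ℝ := StrictMono.orderIsoOfSurjective vol vol_sm vol_surj
  have hinv : Function.invFun vol = fun V => (StrictMono.orderIsoOfSurjective vol vol_sm vol_surj).symm V := by
    funext V
    apply vol_sm.injective
    rw [vol_inv]
    exact ((StrictMono.orderIsoOfSurjective vol vol_sm vol_surj).apply_symm_apply V).symm
  have hc : Continuous (Function.invFun vol) := by
    rw [hinv]
    exact OrderIso.continuous _
  unfold Pfun pres
  exact Continuous.div (by continuity) (by continuity) (fun x => by positivity)

open MeasureTheory intervalIntegral in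
lemma Pfun_intInt (a b : ℝ) : IntervalIntegrable Pfun volume a b :=
  Pfun_cont.intervalIntegrable a b

lemma int_le {a b : ℝ} (ha : 1 ≤ a) (hab : a ≤ b) :
    ∫ u in a..b, Pfun u ≤ (b - a) * Pfun a := by
  have h := intervalIntegral.integral_mono_on hab (Pfun_intInt a b)
      (intervalIntegrable_const (c := Pfun a))
      (fun x hx => Pfun_strictAntiOn.antitoneOn (Set.mem_Ici.mpr ha)
        (Set.mem_Ici.mpr (le_trans ha hx.1)) hx.1)
  simpa using h

lemma le_int {a b : ℝ} (ha : 1 ≤ a) (hab : a ≤ b) :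
    (b - a) * Pfun b ≤ ∫ u in a..b, Pfun u := by
  have h := intervalIntegral.integral_mono_on hab
      (intervalIntegrable_const (c := Pfun b)) (Pfun_intInt a b)
      (fun x hx => Pfun_strictAntiOn.antitoneOn
        (Set.mem_Ici.mpr (le_trans ha hx.1)) (Set.mem_Ici.mpr (le_trans ha hab)) hx.2)
  simpa using h

lemma sum_two_change {N : ℕ} (i j : Fin N) (hij : i ≠ j) (f : Fin N → ℝ) (a b : ℝ)
    (G : ℝ → ℝ) :
    ∑ k, G (Function.update (Function.update f i a) j b k)
      = ∑ k, G (f k) + (G a - G (f i)) + (G b - G (f j)) := by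
  classical
  have h1 : (fun k => G (Function.update (Function.update f i a) j b k))
      = Function.update (Function.update (fun k => G (f k)) i (G a)) j (G b) := by
    funext k
    rcases eq_or_ne k j with rfl | hkj
    · simp
    · rcases eq_or_ne k i with rfl | hki
      · simp [Function.update_of_ne hij, Function.update_of_ne hkj]
      · simp [Function.update_of_ne hkj, Function.update_of_ne hki]
  rw [h1]
  rw [Finset.sum_update_of_mem (Finset.mem_univ j)]
  rw [Finset.sum_update_of_mem (by simp [hij] : i ∈ Finset.univ \ {j})]
  have h2 : ∑ k, G (f k) = G (f j) + ∑ k ∈ Finset.univ \ {j}, G (f k) :=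
    Finset.sum_eq_add_sum_sdiff_singleton_of_mem (Finset.mem_univ j) _
  have h3 : ∑ k ∈ Finset.univ \ {j}, G (f k)
      = G (f i) + ∑ k ∈ (Finset.univ \ {j}) \ {i}, G (f k) :=
    Finset.sum_eq_add_sum_sdiff_singleton_of_mem (by simp [hij] : i ∈ Finset.univ \ {j}) _
  rw [h2, h3]; ring

theorem stmt13 (N : ℕ) (hN : 2 ≤ N) (Vbar : ℝ) (hV : 0 < Vbar)
    (Vstar : Fin N → ℝ)
    (hmem : Vstar ∈ Vset N Vbar)
    (heq : ∀ i j, Pfun (Vstar i) = Pfun (Vstar j))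
    (htwo : ∃ i j, i ≠ j ∧ 1 < Vstar i ∧ 1 < Vstar j) :
    ¬ IsLocalMinOn (Wfun N) (Vset N Vbar) Vstar := by
  obtain ⟨i, j, hij, hi, hj⟩ := htwo
  intro hmin
  rw [IsLocalMinOn, IsMinFilter] at hmin
  obtain ⟨ε, hε, hball⟩ := Metric.mem_nhdsWithin_iff.mp hmin
  set a := Vstar i with ha
  set b := Vstar j with hb
  set t := min (ε / 2) (b - 1) with ht
  have ht0 : 0 < t := lt_min (by linarith) (by linarith)
  have htb : t ≤ b - 1 := min_le_right _ _
  have htε : t < ε := lt_of_le_of_lt (min_le_left _ _) (by linarith)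
  set Vt := Function.update (Function.update Vstar i (a + t)) j (b - t) with hVt
  -- membership
  have hmemt : Vt ∈ Vset N Vbar := by
    have := sum_two_change i j hij Vstar (a + t) (b - t) id
    simp only [id_eq] at this
    show (1 / (N : ℝ)) * ∑ k, Vt k = Vbar
    rw [hVt, this]
    have : ∑ k, Vstar k + (a + t - Vstar i) + (b - t - Vstar j) = ∑ k, Vstar k := by
      rw [← ha, ← hb]; ring
    rw [this]; exact hmem
  -- distance
  have hdist : dist Vt Vstar < ε := by
    rw [dist_pi_lt_iff hε]
    intro k
    rcases eq_or_ne k j with rfl | hkj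
    · simp only [hVt, Function.update_self, Real.dist_eq]
      rw [← hb, abs_of_nonpos (by linarith)]; linarith
    · rcases eq_or_ne k i with rfl | hki
      · simp only [hVt, Function.update_of_ne hij, Function.update_self, Real.dist_eq]
        rw [← ha, abs_of_nonneg (by linarith)]; linarith
      · simp [hVt, Function.update_of_ne hkj, Function.update_of_ne hki, hε]
  have hW : Wfun N Vstar ≤ Wfun N Vt := hball ⟨Metric.mem_ball.mpr hdist, hmemt⟩
  -- compute Wfun N Vt
  have hsum := sum_two_change i j hij Vstar (a + t) (b - t)
      (fun x => ∫ u in (0:ℝ)..x, Pfun u)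
  set A := ∫ u in a..(a + t), Pfun u with hA
  set B := ∫ u in (b - t)..b, Pfun u with hB
  have hFA : (∫ u in (0:ℝ)..(a + t), Pfun u) - (∫ u in (0:ℝ)..a, Pfun u) = A :=
    intervalIntegral.integral_interval_sub_left (Pfun_intInt 0 (a + t)) (Pfun_intInt 0 a)
  have hFB : (∫ u in (0:ℝ)..(b - t), Pfun u) - (∫ u in (0:ℝ)..b, Pfun u) = -B := by
    rw [intervalIntegral.integral_interval_sub_left (Pfun_intInt 0 (b - t)) (Pfun_intInt 0 b), hB]
    exact intervalIntegral.integral_symm (b - t) b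
  -- estimates
  have hc : Pfun a = Pfun b := heq i j
  have hA_lt : A < t * Pfun a := by
    have hsplit : (∫ u in a..(a + t/2), Pfun u) + (∫ u in (a + t/2)..(a + t), Pfun u) = A :=
      intervalIntegral.integral_add_adjacent_intervals (Pfun_intInt _ _) (Pfun_intInt _ _)
    have h1 : (∫ u in a..(a + t/2), Pfun u) ≤ (t/2) * Pfun a := by
      have := int_le (le_of_lt hi) (by linarith : a ≤ a + t/2)
      simpa using this
    have h2 : (∫ u in (a + t/2)..(a + t), Pfun u) ≤ (t/2) * Pfun (a + t/2) := by
      have := int_le (by linarith : (1:ℝ) ≤ a + t/2) (by linarith : a + t/2 ≤ a + t)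
      have heq2 : a + t - (a + t/2) = t/2 := by ring
      rwa [heq2] at this
    have h3 : Pfun (a + t/2) < Pfun a :=
      Pfun_strictAntiOn (Set.mem_Ici.mpr (le_of_lt hi))
        (Set.mem_Ici.mpr (by linarith)) (by linarith)
    nlinarith
  have hB_gt : t * Pfun b < B := by
    have hsplit : (∫ u in (b - t)..(b - t/2), Pfun u) + (∫ u in (b - t/2)..b, Pfun u) = B :=
      intervalIntegral.integral_add_adjacent_intervals (Pfun_intInt _ _) (Pfun_intInt _ _)
    have h1 : (t/2) * Pfun (b - t/2) ≤ ∫ u in (b - t)..(b - t/2), Pfun u := by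
      have := le_int (by linarith : (1:ℝ) ≤ b - t) (by linarith : b - t ≤ b - t/2)
      have heq2 : b - t/2 - (b - t) = t/2 := by ring
      rwa [heq2] at this
    have h2 : (t/2) * Pfun b ≤ ∫ u in (b - t/2)..b, Pfun u := by
      have := le_int (by linarith : (1:ℝ) ≤ b - t/2) (by linarith : b - t/2 ≤ b)
      have heq2 : b - (b - t/2) = t/2 := by ring
      rwa [heq2] at this
    have h3 : Pfun b < Pfun (b - t/2) :=
      Pfun_strictAntiOn (Set.mem_Ici.mpr (by linarith))
        (Set.mem_Ici.mpr (le_of_lt hj)) (by linarith)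
    nlinarith
  have hNpos : (0:ℝ) < 1 / (N : ℝ) := by
    have : (0:ℝ) < (N : ℝ) := by exact_mod_cast (by omega : 0 < N)
    positivity
  rw [← ha, ← hb] at hsum
  have hWt : Wfun N Vt = Wfun N Vstar + (1 / (N : ℝ)) * (A - B) := by
    unfold Wfun
    rw [hVt, hsum]
    linear_combination (1 / (N : ℝ)) * hFA + (1 / (N : ℝ)) * hFB
  have hABneg : A - B < 0 := by nlinarith
  have : Wfun N Vt < Wfun N Vstar := by
    rw [hWt]
    nlinarith [mul_neg_of_pos_of_neg hNpos hABneg]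
  linarith
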